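/- Let G be a finite group and H a subgroup with 1 < H < G. Then W ≤ D, where D is the subgroup generated by the elements lying in no conjugate of H and W is the normal closure in G of the subgroup U = ⟨H ∩ H^g : g ∈ G \ H⟩. -/

import Mathlib

open Pointwise

namespace Stmt4Aux

variable {G : Type*} [Group G]

lemma mem_conj_smul (H : Subgroup G) (c x : G) :
    x ∈ MulAut.conj c • H ↔ c⁻¹ * x * c ∈ H := by
  simp [Subgroup.mem_pointwise_smul_iff_inv_smul_mem, MulAut.smul_def]

lemma conj_smul_eq_self_iff (H : Subgroup G) (c : G) :
    MulAut.conj c • H = H ↔ c ∈ Subgroup.normalizer (H : Set G) := by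
  rw [Subgroup.mem_normalizer_iff, SetLike.ext_iff]
  constructor
  · intro hc h
    have h1 : c * h * c⁻¹ ∈ MulAut.conj c • H ↔ h ∈ H := by
      have := Subgroup.smul_mem_pointwise_smul_iff (a := MulAut.conj c) (S := H) (x := h)
      simpa [MulAut.smul_def] using this
    exact h1.symm.trans (hc _)
  · intro hc x
    rw [mem_conj_smul]
    simpa [mul_assoc] using (hc (c⁻¹ * x * c))

lemma conj_smul_eq_conj_smul (H : Subgroup G) {a b : G} (hab : b⁻¹ * a ∈ Subgroup.normalizer (H : Set G)) :
    MulAut.conj a • H = MulAut.conj b • H := by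
  have h1 : MulAut.conj (b⁻¹ * a) • H = H := (conj_smul_eq_self_iff H _).mpr hab
  calc MulAut.conj a • H = MulAut.conj (b * (b⁻¹ * a)) • H := by
        rw [mul_inv_cancel_left]
    _ = MulAut.conj b • (MulAut.conj (b⁻¹ * a) • H) := by
        rw [map_mul, mul_smul]
    _ = MulAut.conj b • H := by rw [h1]

lemma delta_mem (H : Subgroup G) {y : G}
    (hy : y ∈ {y : G | ∀ k : G, y ∉ MulAut.conj k⁻¹ • H}) (c : G) :
    c * y * c⁻¹ ∈ {y : G | ∀ k : G, y ∉ MulAut.conj k⁻¹ • H} := by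
  intro k hk
  apply hy (k * c)
  simp only [mem_conj_smul, inv_inv] at hk ⊢
  simpa [mul_assoc] using hk

lemma delta_conj (H : Subgroup G) (c : G) :
    (MulAut.conj c) • {y : G | ∀ k : G, y ∉ MulAut.conj k⁻¹ • H}
      = {y : G | ∀ k : G, y ∉ MulAut.conj k⁻¹ • H} := by
  apply subset_antisymm
  · rintro _ ⟨y, hy, rfl⟩
    simpa [MulAut.smul_def] using delta_mem H hy c
  · intro y hy
    refine ⟨c⁻¹ * y * c, by simpa using delta_mem H hy c⁻¹, ?_⟩
    simp [MulAut.smul_def, mul_assoc]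

lemma D_normal (H : Subgroup G) :
    (Subgroup.closure {y : G | ∀ k : G, y ∉ MulAut.conj k⁻¹ • H}).Normal := by
  apply Subgroup.Normal.of_conjugate_fixed
  intro g
  rw [Subgroup.smul_closure, delta_conj]

lemma arith {t h d m nor n σ : ℤ} (h1 : σ + n * m = n * h)
    (h3 : n * nor ≤ t) (h4 : h * d ≤ t * m) (h6 : m + 1 ≤ h) (ht : 1 ≤ t)
    (hm : 0 ≤ m) (hd : 0 ≤ d) (hn : 0 ≤ n) (hnor : 0 ≤ nor)
    (hcase : (t ≤ d + σ ∧ h + 1 ≤ nor) ∨ (t + 1 ≤ d + σ ∧ h ≤ nor)) : False := by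
  have hh : 1 ≤ h := by linarith
  have e1 : σ = n * (h - m) := by
    have : n * (h - m) = n * h - n * m := by ring
    linarith
  have e2 : d * (h * nor) ≤ t * m * nor := by
    have := mul_le_mul_of_nonneg_right h4 hnor
    nlinarith [this]
  have e3 : σ * (h * nor) ≤ (h - m) * h * t := by
    have h0 : (0:ℤ) ≤ (h - m) * h := by nlinarith
    have := mul_le_mul_of_nonneg_left h3 h0
    rw [e1]; nlinarith [this]
  rcases hcase with ⟨hc1, hc2⟩ | ⟨hc1, hc2⟩
  · -- case A
    have step3 : t * (h * nor) ≤ t * m * nor + (h - m) * h * t := by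
      have := mul_le_mul_of_nonneg_right hc1
        (by positivity : (0:ℤ) ≤ h * nor)
      nlinarith [this, e2, e3]
    have step4 : h * nor ≤ m * nor + (h - m) * h := by
      have h' : t * (h * nor) ≤ t * (m * nor + (h - m) * h) := by nlinarith [step3]
      exact le_of_mul_le_mul_left h' (by linarith)
    nlinarith [mul_le_mul_of_nonneg_left hc2 (by linarith : (0:ℤ) ≤ h - m)]
  · -- case B
    have step3 : (t + 1) * (h * nor) ≤ t * m * nor + (h - m) * h * t := by
      have := mul_le_mul_of_nonneg_right hc1
        (by positivity : (0:ℤ) ≤ h * nor)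
      nlinarith [this, e2, e3]
    have hle : m * nor + (h - m) * h ≤ h * nor := by
      nlinarith [mul_le_mul_of_nonneg_left hc2 (by linarith : (0:ℤ) ≤ h - m)]
    have : t * (h * nor) + h * nor ≤ t * (h * nor) := by nlinarith [step3, hle]
    nlinarith [this]

lemma key [Finite G] (H : Subgroup G) {g x : G} (hg : g ∉ H) (hx : x ∈ H)
    (hx2 : x ∈ MulAut.conj g⁻¹ • H) :
    x ∈ Subgroup.closure {y : G | ∀ k : G, y ∉ MulAut.conj k⁻¹ • H} := by
  classical
  by_contra hxD
  have _ := Fintype.ofFinite G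
  set Δ : Set G := {y : G | ∀ k : G, y ∉ MulAut.conj k⁻¹ • H} with hΔ
  set D : Subgroup G := Subgroup.closure Δ with hD
  have hDnormal : D.Normal := D_normal H
  set N := Subgroup.normalizer (H : Set G) with hN
  set f : G → Subgroup G := fun k => MulAut.conj k • H with hf
  set S : Finset (Subgroup G) := Finset.image f Finset.univ with hS
  set u : Subgroup G → Finset G :=
    fun C => (Set.toFinite ((C : Set G) \ (D : Set G))).toFinset with hu
  set t := Nat.card G with hts
  set h := Nat.card H with hhs
  set d := Nat.card D with hds
  set m := Nat.card (H ⊓ D : Subgroup G) with hms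
  set nor := Nat.card N with hnors
  set n := S.card with hns
  have hmemu : ∀ (C : Subgroup G) (z : G), z ∈ u C ↔ z ∈ C ∧ z ∉ D := by
    intro C z
    rw [hu]
    dsimp only
    rw [Set.Finite.mem_toFinset]
    exact Iff.rfl
  -- each conjugate has h elements, m of which lie in D
  have huf : ∀ k : G, (u (f k)).card + m = h := by
    intro k
    have hDsmul : MulAut.conj k • D = D := Subgroup.Normal.conj_smul_eq_self k D
    have hinf : (f k) ⊓ D = MulAut.conj k • (H ⊓ D) := by
      rw [hf]; dsimp only
      rw [Subgroup.smul_inf, hDsmul]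
    have hCcard : ((f k : Subgroup G) : Set G).ncard = h := by
      rw [hf]; dsimp only
      rw [Subgroup.coe_pointwise_smul, Set.ncard_smul_set, hhs]
      exact (Nat.card_coe_set_eq _).symm
    have hIcard : (((f k : Subgroup G) : Set G) ∩ (D : Set G)).ncard = m := by
      have h2 : ((f k : Subgroup G) : Set G) ∩ (D : Set G) = ((f k ⊓ D : Subgroup G) : Set G) := by
        rw [Subgroup.coe_inf]
      rw [h2, hinf, Subgroup.coe_pointwise_smul, Set.ncard_smul_set, hms]
      exact (Nat.card_coe_set_eq _).symm
    have hdiff := Set.ncard_diff_add_ncard_of_subset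
      (Set.inter_subset_left (s := ((f k : Subgroup G) : Set G)) (t := (D : Set G)))
      (Set.toFinite _)
    rw [Set.diff_self_inter] at hdiff
    have hucard : (u (f k)).card = (((f k : Subgroup G) : Set G) \ (D : Set G)).ncard := by
      rw [hu]; dsimp only
      exact (Set.ncard_eq_toFinset_card _ (Set.toFinite _)).symm
    rw [hucard, ← hCcard, ← hIcard]
    exact hdiff
  have hcard : ∀ C ∈ S, (u C).card + m = h := by
    intro C hC
    rw [hS, Finset.mem_image] at hC
    obtain ⟨k, -, rfl⟩ := hC
    exact huf k
  -- sum over all conjugates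
  set σ := ∑ C ∈ S, (u C).card with hσs
  have hσ : σ + n * m = n * h := by
    have hsum : ∑ C ∈ S, ((u C).card + m) = ∑ C ∈ S, h := Finset.sum_congr rfl hcard
    rw [Finset.sum_add_distrib, Finset.sum_const, smul_eq_mul, Finset.sum_const, smul_eq_mul]
      at hsum
    exact hsum
  -- the complement of D
  set cpl : Finset G := (Set.toFinite ((D : Set G)ᶜ)).toFinset with hcpl
  have htdc : t = d + cpl.card := by
    have h1 := Set.ncard_add_ncard_compl (D : Set G)
    have h2 : cpl.card = ((D : Set G)ᶜ).ncard := by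
      rw [hcpl]
      exact (Set.ncard_eq_toFinset_card _ (Set.toFinite _)).symm
    have h3 : d = ((D : Set G)).ncard := by
      rw [hds, ← Nat.card_coe_set_eq]
      rfl
    rw [hts]
    omega
  -- covering
  have hcover : cpl ⊆ S.biUnion u := by
    intro z hz
    have hzD : z ∉ D := by
      rw [hcpl, Set.Finite.mem_toFinset] at hz
      exact hz
    have hzΔ : z ∉ Δ := fun hzΔ => hzD (Subgroup.subset_closure hzΔ)
    rw [hΔ, Set.mem_setOf_eq] at hzΔ
    push_neg at hzΔ
    obtain ⟨k, hk⟩ := hzΔ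
    rw [Finset.mem_biUnion]
    refine ⟨f k⁻¹, ?_, ?_⟩
    · rw [hS]; exact Finset.mem_image_of_mem f (Finset.mem_univ _)
    · rw [hmemu]
      exact ⟨hk, hzD⟩
  -- |S| * |N| ≤ |G|
  have hSN : n * nor ≤ t := by
    set rep : Subgroup G → G := fun C => if hc : ∃ k : G, f k = C then hc.choose else 1 with hrep
    have hrepS : ∀ C ∈ S, f (rep C) = C := by
      intro C hC
      rw [hS, Finset.mem_image] at hC
      obtain ⟨k, -, hk⟩ := hC
      have hex : ∃ k, f k = C := ⟨k, hk⟩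
      rw [hrep]; dsimp only
      rw [dif_pos hex]
      exact hex.choose_spec
    set Nfin : Finset G := (Set.toFinite (N : Set G)).toFinset with hNfin
    have hinj : ∀ p ∈ S ×ˢ Nfin, ∀ q ∈ S ×ˢ Nfin,
        (fun p : Subgroup G × G => rep p.1 * p.2) p
          = (fun p : Subgroup G × G => rep p.1 * p.2) q → p = q := by
      rintro ⟨C₁, a₁⟩ hp ⟨C₂, a₂⟩ hq heq
      rw [Finset.mem_product] at hp hq
      obtain ⟨hp1, hp2⟩ := hp
      obtain ⟨hq1, hq2⟩ := hq
      dsimp only at heq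
      rw [hNfin, Set.Finite.mem_toFinset] at hp2 hq2
      have hmemN : (rep C₂)⁻¹ * rep C₁ ∈ N := by
        have hre : rep C₁ = rep C₂ * a₂ * a₁⁻¹ := by rw [← heq]; group
        have : (rep C₂)⁻¹ * rep C₁ = a₂ * a₁⁻¹ := by rw [hre]; group
        rw [this]
        exact mul_mem hq2 (inv_mem hp2)
      have hCC : C₁ = C₂ := by
        rw [← hrepS C₁ hp1, ← hrepS C₂ hq1, hf]
        exact conj_smul_eq_conj_smul H hmemN
      subst hCC
      have : a₁ = a₂ := by
        exact mul_left_cancel heq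
      rw [this]
    have hcle := Finset.card_le_card_of_injOn (fun p : Subgroup G × G => rep p.1 * p.2)
      (fun p _ => Finset.mem_univ _) (fun p hp q hq => hinj p hp q hq)
    rw [Finset.card_product] at hcle
    have hNcard : Nfin.card = nor := by
      rw [hNfin, ← Set.ncard_eq_toFinset_card _ (Set.toFinite _), hnors, ← Nat.card_coe_set_eq]
      rfl
    rw [hNcard, ← hns] at hcle
    rw [hts, Nat.card_eq_fintype_card]
    exact hcle.trans (le_of_eq (Finset.card_univ))
  -- |H| * |D| ≤ |G| * |H ⊓ D|
  have hHD : h * d ≤ t * m := by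
    have hco : m * (H.relIndex D) = d := by
      have h1 := Subgroup.card_mul_index ((H ⊓ D).subgroupOf D)
      have h2 : Nat.card ((H ⊓ D).subgroupOf D) = m := by
        rw [hms]
        exact Nat.card_congr (Subgroup.subgroupOfEquivOfLe inf_le_right).toEquiv
      have h3 : ((H ⊓ D).subgroupOf D).index = H.relIndex D := by
        rw [← Subgroup.inf_relIndex_right]
        rfl
      rw [h2, h3, ← hds] at h1
      exact h1
    have hle : H.relIndex D ≤ H.index := by
      have hne : H.relIndex (⊤ : Subgroup G) ≠ 0 := by
        rw [Subgroup.relIndex_top_right]; exact Subgroup.index_ne_zero_of_finite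
      have := Subgroup.relIndex_le_of_le_right (H := H) (le_top : D ≤ ⊤) hne
      rwa [Subgroup.relIndex_top_right] at this
    have hti : h * H.index = t := by
      rw [hhs, hts]; exact Subgroup.card_mul_index H
    calc h * d = h * (m * H.relIndex D) := by rw [hco]
      _ = m * (h * H.relIndex D) := by ring
      _ ≤ m * (h * H.index) := by
          exact Nat.mul_le_mul_left _ (Nat.mul_le_mul_left _ hle)
      _ = t * m := by rw [hti]; ring
  -- x gives m < h
  have hxu : x ∈ u H := by rw [hmemu]; exact ⟨hx, hxD⟩
  have hHS : H ∈ S := by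
    rw [hS]
    refine Finset.mem_image.mpr ⟨1, Finset.mem_univ _, ?_⟩
    rw [hf]; dsimp only
    rw [map_one, one_smul]
  have hmh : m + 1 ≤ h := by
    have := hcard H hHS
    have hpos : 0 < (u H).card := Finset.card_pos.mpr ⟨x, hxu⟩
    omega
  have ht1 : 1 ≤ t := Nat.card_pos
  -- case split
  have hcase : (t ≤ d + σ ∧ h + 1 ≤ nor) ∨ (t + 1 ≤ d + σ ∧ h ≤ nor) := by
    by_cases hC2 : f g⁻¹ = H
    · left
      constructor
      · have h1 : cpl.card ≤ σ :=
          le_trans (Finset.card_le_card hcover) Finset.card_biUnion_le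
        omega
      · -- H < N
        have hgN : g⁻¹ ∈ Subgroup.normalizer (H : Set G) := by
          rw [← conj_smul_eq_self_iff]
          exact hC2
        have hlt : H < N := by
          rw [hN]
          refine lt_of_le_of_ne Subgroup.le_normalizer ?_
          intro hEq
          apply hg
          have hginv : g⁻¹ ∈ H := by rw [hEq]; exact hgN
          simpa using inv_mem hginv
        have hcardlt : Nat.card H < Nat.card N := by
          have hss : (H : Set G) ⊂ (N : Set G) := SetLike.coe_ssubset_coe.mpr hlt
          have := Set.ncard_lt_ncard hss (Set.toFinite _)
          rw [← Nat.card_coe_set_eq, ← Nat.card_coe_set_eq] at this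
          exact this
        omega
    · right
      constructor
      · -- strict covering bound
        have hC2S : f g⁻¹ ∈ S := by
          rw [hS]; exact Finset.mem_image_of_mem f (Finset.mem_univ _)
        have hxu2 : x ∈ u (f g⁻¹) := by
          rw [hmemu]
          refine ⟨?_, hxD⟩
          rw [hf]; exact hx2
        set A : Finset G := (S.erase (f g⁻¹)).biUnion u with hA
        set B : Finset G := u (f g⁻¹) with hB
        have hSB : S.biUnion u = B ∪ A := by
          conv_lhs => rw [← Finset.insert_erase hC2S]
          rw [Finset.biUnion_insert]
        have hxA : x ∈ A := by
          rw [hA, Finset.mem_biUnion]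
          exact ⟨H, Finset.mem_erase.mpr ⟨fun hEq => hC2 hEq.symm, hHS⟩, hxu⟩
        have hxAB : x ∈ B ∩ A := Finset.mem_inter.mpr ⟨hxu2, hxA⟩
        have h1 : cpl.card + 1 ≤ σ := by
          have e1 : cpl.card ≤ (B ∪ A).card := by
            rw [← hSB]; exact Finset.card_le_card hcover
          have e2 : (B ∪ A).card + (B ∩ A).card = B.card + A.card :=
            Finset.card_union_add_card_inter B A
          have e3 : 1 ≤ (B ∩ A).card := Finset.card_pos.mpr ⟨x, hxAB⟩
          have e4 : A.card ≤ ∑ C ∈ S.erase (f g⁻¹), (u C).card := Finset.card_biUnion_le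
          have e5 : ∑ C ∈ S.erase (f g⁻¹), (u C).card + B.card = σ := by
            rw [hσs, hB]
            exact Finset.sum_erase_add S _ hC2S
          omega
        omega
      · rw [hhs, hnors, hN]
        exact Subgroup.card_le_of_le Subgroup.le_normalizer
  -- arithmetic conclusion
  have hfin : False := by
    refine arith (t := (t:ℤ)) (h := (h:ℤ)) (d := (d:ℤ)) (m := (m:ℤ)) (nor := (nor:ℤ))
      (n := (n:ℤ)) (σ := (σ:ℤ)) ?_ ?_ ?_ ?_ ?_ ?_ ?_ ?_ ?_ ?_
    · exact_mod_cast congrArg (Nat.cast : ℕ → ℤ) hσ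
    · exact_mod_cast hSN
    · exact_mod_cast hHD
    · exact_mod_cast hmh
    · exact_mod_cast ht1
    · positivity
    · positivity
    · positivity
    · positivity
    · rcases hcase with ⟨h1, h2⟩ | ⟨h1, h2⟩
      · left; constructor <;> exact_mod_cast ‹_›
      · right; constructor <;> exact_mod_cast ‹_›
  exact hfin


end Stmt4Aux

/-- `W ≤ D`, where `D` is generated by the elements in no conjugate of `H` and
`W` is the normal closure of `U = ⟨H ∩ H^g : g ∉ H⟩`. -/
theorem stmt_4 {G : Type*} [Group G] [Finite G] (H : Subgroup G)
    (hbot : H ≠ ⊥) (htop : H ≠ ⊤) :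
    Subgroup.normalClosure
        ((Subgroup.closure (⋃ g ∈ {g : G | g ∉ H},
          ((H ⊓ MulAut.conj g⁻¹ • H : Subgroup G) : Set G))) : Set G) ≤
      Subgroup.closure {y : G | ∀ g : G, y ∉ MulAut.conj g⁻¹ • H} := by
  have hDnormal := Stmt4Aux.D_normal H
  apply Subgroup.normalClosure_le_normal
  rw [SetLike.coe_subset_coe, Subgroup.closure_le]
  intro y hy
  simp only [Set.mem_iUnion, Set.mem_setOf_eq, SetLike.mem_coe] at hy
  obtain ⟨g, hg, hy⟩ := hy
  rw [Subgroup.mem_inf] at hy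
  exact Stmt4Aux.key H hg hy.1 hy.2
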